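/- Consider the scalar nonlinear recursion x_{k+1} = (1/2)·x_k³/(1 + x_k²) + u_k with x_0 = 0. If u ∈ ℓ²(ℕ, ℝ), then x ∈ ℓ²(ℕ, ℝ) and ‖x‖_{ℓ²} ≤ 2‖u‖_{ℓ²}. -/

import Mathlib

private lemma minkowski_fin (s : Finset ℕ) (a b : ℕ → ℝ) :
    Real.sqrt (∑ k ∈ s, (a k + b k) ^ 2) ≤
      Real.sqrt (∑ k ∈ s, (a k) ^ 2) + Real.sqrt (∑ k ∈ s, (b k) ^ 2) := by
  have hA : (0:ℝ) ≤ ∑ k ∈ s, (a k) ^ 2 := Finset.sum_nonneg fun k _ => sq_nonneg _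
  have hB : (0:ℝ) ≤ ∑ k ∈ s, (b k) ^ 2 := Finset.sum_nonneg fun k _ => sq_nonneg _
  have hcs : (∑ k ∈ s, a k * b k) ≤ Real.sqrt (∑ k ∈ s, (a k)^2) * Real.sqrt (∑ k ∈ s, (b k)^2) := by
    have h := Finset.sum_mul_sq_le_sq_mul_sq s a b
    calc (∑ k ∈ s, a k * b k) ≤ |∑ k ∈ s, a k * b k| := le_abs_self _
    _ = Real.sqrt ((∑ k ∈ s, a k * b k)^2) := (Real.sqrt_sq_eq_abs _).symm
    _ ≤ Real.sqrt ((∑ k ∈ s, (a k)^2) * (∑ k ∈ s, (b k)^2)) := Real.sqrt_le_sqrt h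
    _ = _ := Real.sqrt_mul hA _
  have key : (∑ k ∈ s, (a k + b k) ^ 2) ≤
      (Real.sqrt (∑ k ∈ s, (a k)^2) + Real.sqrt (∑ k ∈ s, (b k)^2))^2 := by
    have e1 : (∑ k ∈ s, (a k + b k) ^ 2) =
        (∑ k ∈ s, (a k)^2) + 2 * (∑ k ∈ s, a k * b k) + (∑ k ∈ s, (b k)^2) := by
      rw [Finset.mul_sum, ← Finset.sum_add_distrib, ← Finset.sum_add_distrib]
      exact Finset.sum_congr rfl fun k _ => by ring
    rw [e1, add_sq, Real.sq_sqrt hA, Real.sq_sqrt hB]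
    nlinarith [hcs]
  calc Real.sqrt (∑ k ∈ s, (a k + b k) ^ 2) ≤
      Real.sqrt ((Real.sqrt (∑ k ∈ s, (a k)^2) + Real.sqrt (∑ k ∈ s, (b k)^2))^2) :=
        Real.sqrt_le_sqrt key
    _ = _ := Real.sqrt_sq (by positivity)

theorem nonlinear_recursion_l2_gain_two
    (x u : ℕ → ℝ) (hx0 : x 0 = 0)
    (hrec : ∀ k : ℕ, x (k + 1) = (1 / 2) * (x k) ^ 3 / (1 + (x k) ^ 2) + u k)
    (hu : Summable (fun k => (u k) ^ 2)) :
    Summable (fun k => (x k) ^ 2) ∧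
      Real.sqrt (∑' k, (x k) ^ 2) ≤ 2 * Real.sqrt (∑' k, (u k) ^ 2) := by
  set U := ∑' k, (u k) ^ 2 with hU
  have hU0 : 0 ≤ U := tsum_nonneg fun k => sq_nonneg _
  -- pointwise bound |x (k+1)| ≤ |x k|/2 + |u k|
  have habs : ∀ k, |x (k+1)| ≤ |x k| / 2 + |u k| := by
    intro k
    rw [hrec k]
    refine (abs_add_le _ _).trans (add_le_add_left ?_ _)
    rw [abs_div, abs_mul]
    have h1 : (0:ℝ) < 1 + (x k)^2 := by positivity
    rw [abs_of_pos h1]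
    rw [div_le_iff₀ h1]
    have h3 : |x k ^ 3| = |x k| * (x k)^2 := by
      rw [pow_succ, abs_mul, abs_of_nonneg (sq_nonneg _)]; ring
    rw [h3, show |(1:ℝ)/2| = 1/2 from by norm_num]
    nlinarith [abs_nonneg (x k), sq_nonneg (x k)]
  -- partial sum bound
  have hbound : ∀ N, (∑ k ∈ Finset.range N, (x k)^2) ≤ 4 * U := by
    intro N
    rcases N with _ | N
    · simpa using (by positivity : (0:ℝ) ≤ 4 * U)
    set P := Real.sqrt (∑ k ∈ Finset.range (N+1), (x k)^2) with hP
    have hPsq : P ^ 2 = ∑ k ∈ Finset.range (N+1), (x k)^2 :=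
      Real.sq_sqrt (Finset.sum_nonneg fun k _ => sq_nonneg _)
    have hshift : (∑ k ∈ Finset.range (N+1), (x k)^2)
        = ∑ k ∈ Finset.range N, (x (k+1))^2 := by
      rw [Finset.sum_range_succ' (fun k => (x k)^2) N, hx0]
      simp
    have step1 : Real.sqrt (∑ k ∈ Finset.range N, (x (k+1))^2) ≤
        Real.sqrt (∑ k ∈ Finset.range N, (|x k|/2)^2) +
        Real.sqrt (∑ k ∈ Finset.range N, (|u k|)^2) := by
      refine le_trans ?_ (minkowski_fin (Finset.range N) (fun k => |x k|/2) (fun k => |u k|))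
      apply Real.sqrt_le_sqrt
      apply Finset.sum_le_sum
      intro k _
      have := habs k
      have h2 : (x (k+1))^2 = |x (k+1)|^2 := (sq_abs _).symm
      rw [h2]
      have : |x (k+1)| ≤ |x k|/2 + |u k| := habs k
      nlinarith [abs_nonneg (x (k+1)), abs_nonneg (x k), abs_nonneg (u k)]
    have ea : (∑ k ∈ Finset.range N, (|x k|/2)^2) = (1/4) * ∑ k ∈ Finset.range N, (x k)^2 := by
      rw [Finset.mul_sum]; congr 1; funext k; rw [div_pow, sq_abs]; ring
    have eb : (∑ k ∈ Finset.range N, (|u k|)^2) = ∑ k ∈ Finset.range N, (u k)^2 := by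
      congr 1; funext k; rw [sq_abs]
    have hub : Real.sqrt (∑ k ∈ Finset.range N, (u k)^2) ≤ Real.sqrt U := by
      apply Real.sqrt_le_sqrt
      exact Summable.sum_le_tsum _ (fun k _ => sq_nonneg _) hu
    have hmono : (∑ k ∈ Finset.range N, (x k)^2) ≤ ∑ k ∈ Finset.range (N+1), (x k)^2 := by
      apply Finset.sum_le_sum_of_subset_of_nonneg
      · exact Finset.range_subset_range.mpr (Nat.le_succ N)
      · intro k _ _; exact sq_nonneg _
    have hPle : P ≤ P / 2 + Real.sqrt U := by
      calc P = Real.sqrt (∑ k ∈ Finset.range N, (x (k+1))^2) := by rw [hP, hshift]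
      _ ≤ Real.sqrt (∑ k ∈ Finset.range N, (|x k|/2)^2) +
            Real.sqrt (∑ k ∈ Finset.range N, (|u k|)^2) := step1
      _ = Real.sqrt ((1/4) * ∑ k ∈ Finset.range N, (x k)^2) +
            Real.sqrt (∑ k ∈ Finset.range N, (u k)^2) := by rw [ea, eb]
      _ ≤ Real.sqrt ((1/4) * ∑ k ∈ Finset.range (N+1), (x k)^2) + Real.sqrt U := by
            gcongr
      _ = P / 2 + Real.sqrt U := by
            rw [Real.sqrt_mul (by norm_num), show (1:ℝ)/4 = (1/2)^2 by norm_num,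
              Real.sqrt_sq (by norm_num)]
            ring
    have hP2 : P ≤ 2 * Real.sqrt U := by linarith
    calc (∑ k ∈ Finset.range (N+1), (x k)^2) = P^2 := hPsq.symm
    _ ≤ (2 * Real.sqrt U)^2 := by
        apply pow_le_pow_left₀ (by positivity) hP2 2
    _ = 4 * U := by rw [mul_pow, Real.sq_sqrt hU0]; ring
  have hsum : Summable (fun k => (x k)^2) :=
    summable_of_sum_range_le (fun k => sq_nonneg _) hbound
  refine ⟨hsum, ?_⟩
  have htsum : (∑' k, (x k)^2) ≤ 4 * U := Summable.tsum_le_of_sum_range_le hsum hbound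
  calc Real.sqrt (∑' k, (x k)^2) ≤ Real.sqrt (4 * U) := Real.sqrt_le_sqrt htsum
  _ = 2 * Real.sqrt U := by
      rw [Real.sqrt_mul (by norm_num), show (4:ℝ) = 2^2 by norm_num, Real.sqrt_sq (by norm_num)]
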